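/- For every fixed real s > 0, the function h(t) = (1 + s² − t)² − 4s² − s⁴·(1 + 1/(t−1))², defined for t > 1, satisfies lim_{t→1⁺} h(t) = −∞ and lim_{t→+∞} h(t) = +∞, and h has exactly one zero in the interval (1, +∞). -/

import Mathlib

open Filter Topology

private lemma key_iff (s t : ℝ) (ht : 1 < t) :
    ((1 + s ^ 2 - t) ^ 2 - 4 * s ^ 2 - s ^ 4 * (1 + 1 / (t - 1)) ^ 2 = 0) ↔
    2*s^2/(t-1) + 4*s^2/(t-1)^2 + 2*s^4/(t-1)^3 + s^4/(t-1)^4 = 1 := by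
  have hu : t - 1 ≠ 0 := by intro h; linarith [h]
  have h1 : (1 + s ^ 2 - t) ^ 2 - 4 * s ^ 2 - s ^ 4 * (1 + 1 / (t - 1)) ^ 2
      = ((t-1)^4 - 2*s^2*(t-1)^3 - 4*s^2*(t-1)^2 - 2*s^4*(t-1) - s^4)/(t-1)^2 := by
    field_simp
    ring
  have h2 : 2*s^2/(t-1) + 4*s^2/(t-1)^2 + 2*s^4/(t-1)^3 + s^4/(t-1)^4 - 1
      = -((t-1)^4 - 2*s^2*(t-1)^3 - 4*s^2*(t-1)^2 - 2*s^4*(t-1) - s^4)/(t-1)^4 := by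
    field_simp
    ring
  rw [h1, div_eq_zero_iff, ← sub_eq_zero (b := (1:ℝ)), h2, neg_div, neg_eq_zero,
    div_eq_zero_iff]
  simp [hu, pow_ne_zero]

private lemma phi_anti (s : ℝ) (hs : 0 < s) {a b : ℝ} (ha : 0 < a) (hab : a < b) :
    2*s^2/b + 4*s^2/b^2 + 2*s^4/b^3 + s^4/b^4 <
    2*s^2/a + 4*s^2/a^2 + 2*s^4/a^3 + s^4/a^4 := by
  have hb : 0 < b := lt_trans ha hab
  have hs2 : 0 < s^2 := by positivity
  have hs4 : 0 < s^4 := by positivity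
  have t1 : 2*s^2/b < 2*s^2/a := by
    apply div_lt_div_of_pos_left (by positivity) ha hab
  have t2 : 4*s^2/b^2 < 4*s^2/a^2 := by
    apply div_lt_div_of_pos_left (by positivity) (by positivity) (by nlinarith)
  have t3 : 2*s^4/b^3 < 2*s^4/a^3 := by
    apply div_lt_div_of_pos_left (by positivity) (by positivity)
      (pow_lt_pow_left₀ hab ha.le (by norm_num))
  have t4 : s^4/b^4 < s^4/a^4 := by
    apply div_lt_div_of_pos_left (by positivity) (by positivity)
      (pow_lt_pow_left₀ hab ha.le (by norm_num))
  linarith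

/-- for every fixed real `s > 0`, the function
`h(t) = (1 + s² − t)² − 4s² − s⁴·(1 + 1/(t−1))²` on `t > 1` satisfies
`h(t) → −∞` as `t → 1⁺`, `h(t) → +∞` as `t → +∞`, and `h` has exactly
one zero in `(1, +∞)`. -/
theorem stmt2 (s : ℝ) (hs : 0 < s) :
    Filter.Tendsto (fun t : ℝ => (1 + s ^ 2 - t) ^ 2 - 4 * s ^ 2 - s ^ 4 * (1 + 1 / (t - 1)) ^ 2)
      (nhdsWithin 1 (Set.Ioi 1)) Filter.atBot ∧
    Filter.Tendsto (fun t : ℝ => (1 + s ^ 2 - t) ^ 2 - 4 * s ^ 2 - s ^ 4 * (1 + 1 / (t - 1)) ^ 2)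
      Filter.atTop Filter.atTop ∧
    ∃! t : ℝ, t ∈ Set.Ioi (1 : ℝ) ∧
      (1 + s ^ 2 - t) ^ 2 - 4 * s ^ 2 - s ^ 4 * (1 + 1 / (t - 1)) ^ 2 = 0 := by
  set h : ℝ → ℝ := fun t : ℝ =>
    (1 + s ^ 2 - t) ^ 2 - 4 * s ^ 2 - s ^ 4 * (1 + 1 / (t - 1)) ^ 2 with hh
  -- limit at 1⁺
  have hinv : Tendsto (fun t : ℝ => 1 / (t - 1)) (nhdsWithin 1 (Set.Ioi 1)) atTop := by
    simp only [one_div]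
    apply tendsto_inv_nhdsGT_zero.comp
    apply tendsto_nhdsWithin_of_tendsto_nhds_of_eventually_within
    · have : Tendsto (fun t : ℝ => t - 1) (nhds 1) (nhds (1 - 1)) :=
        (continuous_id.sub continuous_const).tendsto 1
      simpa using this.mono_left nhdsWithin_le_nhds
    · filter_upwards [self_mem_nhdsWithin] with t ht
      simpa using (sub_pos.mpr (Set.mem_Ioi.mp ht))
  have hbot : Tendsto h (nhdsWithin 1 (Set.Ioi 1)) atBot := by
    have h1 : Tendsto (fun t : ℝ => -(s ^ 4 * (1 + 1 / (t - 1)) ^ 2))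
        (nhdsWithin 1 (Set.Ioi 1)) atBot := by
      have hpos : Tendsto (fun t : ℝ => s ^ 4 * (1 + 1 / (t - 1)) ^ 2)
          (nhdsWithin 1 (Set.Ioi 1)) atTop :=
        Filter.Tendsto.const_mul_atTop (by positivity)
          ((tendsto_pow_atTop (two_ne_zero)).comp (tendsto_atTop_add_const_left _ 1 hinv))
      exact tendsto_neg_atBot_iff.mpr hpos
    have h2 : Tendsto (fun t : ℝ => (1 + s ^ 2 - t) ^ 2 - 4 * s ^ 2)
        (nhdsWithin 1 (Set.Ioi 1)) (nhds ((1 + s ^ 2 - 1) ^ 2 - 4 * s ^ 2)) := by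
      apply Filter.Tendsto.mono_left _ nhdsWithin_le_nhds
      exact (Continuous.tendsto (by continuity) 1)
    have := h2.add_atBot h1
    apply this.congr
    intro x; simp [hh]; ring
  -- limit at ∞
  have htop : Tendsto h atTop atTop := by
    have h1 : Tendsto (fun t : ℝ => (1 + s ^ 2 - t) ^ 2) atTop atTop := by
      have : Tendsto (fun t : ℝ => (t - (1 + s ^ 2)) ^ 2) atTop atTop :=
        (tendsto_pow_atTop (two_ne_zero)).comp (tendsto_atTop_add_const_right _ _ tendsto_id)
      apply this.congr; intro x; ring
    have h2 : Tendsto (fun t : ℝ => - 4 * s ^ 2 - s ^ 4 * (1 + 1 / (t - 1)) ^ 2) atTop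
        (nhds (- 4 * s ^ 2 - s ^ 4 * (1 + 0) ^ 2)) := by
      have hz : Tendsto (fun t : ℝ => 1 / (t - 1)) atTop (nhds 0) := by
        simp only [one_div]
        exact tendsto_inv_atTop_zero.comp (tendsto_atTop_add_const_right _ _ tendsto_id)
      exact (tendsto_const_nhds.sub
        (tendsto_const_nhds.mul (((tendsto_const_nhds.add hz)).pow 2)))
    have := h1.atTop_add h2
    apply this.congr
    intro x; simp [hh]; ring
  refine ⟨hbot, htop, ?_⟩
  -- find a point where h < 0
  obtain ⟨a, ha1, ha0⟩ : ∃ a : ℝ, 1 < a ∧ h a < 0 := by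
    have := (hbot.eventually (eventually_lt_atBot 0)).and self_mem_nhdsWithin
    obtain ⟨a, h1, h2⟩ := this.exists
    exact ⟨a, h2, h1⟩
  -- find a point where h > 0, beyond a
  obtain ⟨b, hab, hb0⟩ : ∃ b : ℝ, a < b ∧ 0 < h b := by
    have := (htop.eventually (eventually_gt_atTop 0)).and (eventually_gt_atTop a)
    obtain ⟨b, h1, h2⟩ := this.exists
    exact ⟨b, h2, h1⟩
  have hcont : ContinuousOn h (Set.Icc a b) := by
    apply ContinuousOn.sub (ContinuousOn.sub (by fun_prop) (by fun_prop))
    apply ContinuousOn.mul continuousOn_const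
    apply ContinuousOn.pow
    apply ContinuousOn.add continuousOn_const
    apply ContinuousOn.div continuousOn_const (by fun_prop)
    intro x hx
    have : 1 < x := lt_of_lt_of_le ha1 hx.1
    intro hc; rw [sub_eq_zero] at hc; exact absurd hc this.ne'
  obtain ⟨c, hc, hc0⟩ := intermediate_value_Icc (le_of_lt hab) hcont
    ⟨le_of_lt ha0, le_of_lt hb0⟩
  have hc1 : 1 < c := lt_of_lt_of_le ha1 hc.1
  refine ⟨c, ⟨hc1, hc0⟩, ?_⟩
  -- uniqueness
  intro y ⟨hy1, hy0⟩
  rw [Set.mem_Ioi] at hy1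
  by_contra hne
  have key_y := (key_iff s y hy1).mp hy0
  have key_c := (key_iff s c hc1).mp hc0
  rcases lt_or_gt_of_ne hne with hlt | hlt
  · have := phi_anti s hs (a := y - 1) (b := c - 1) (by linarith) (by linarith)
    rw [key_y, key_c] at this
    exact lt_irrefl 1 this
  · have := phi_anti s hs (a := c - 1) (b := y - 1) (by linarith) (by linarith)
    rw [key_y, key_c] at this
    exact lt_irrefl 1 this
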